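/- arXiv:2301.05846 — 2 statements merged into one kernel-verified Lean document; each statement's English description precedes it below -/
import Mathlib

section
/- Let Γ₀ be a linearly ordered commutative group with zero such that every nonzero element of Γ₀ admits an n-th root for every integer n ≥ 1. Let K be a field, v : K → Γ₀ a valuation, L a finite field extension of K, f ∈ L, and γ ∈ Γ₀ with γ < 1. Assume that for every valuation w : L → Γ₀ whose restriction along the embedding K → L equals v, one has w(f − 1) ≤ γ. Then v(N_{L/K}(f) − 1) ≤ γ, where N_{L/K} : L → K denotes the field norm. (This is Lemma 5.3 of the paper, stated in multiplicative valuation notation: 'w(x) ≤ γ' here corresponds to the additive inequality 'w(x) ≥ γ' in the paper, and the divisibility hypothesis on Γ₀ plays the role of working in Γ ⊗ ℚ.) -/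
open IntermediateField Module Polynomial

lemma pow_left_inj₀' {Γ₀ : Type*} [LinearOrderedCommGroupWithZero Γ₀] {a b : Γ₀} {n : ℕ}
    (hn : n ≠ 0) (h : a ^ n = b ^ n) : a = b := by
  rcases lt_trichotomy a b with hc|hc|hc
  · exact absurd h (pow_lt_pow_left₀ hc zero_le' hn).ne
  · exact hc
  · exact absurd h.symm (pow_lt_pow_left₀ hc zero_le' hn).ne

lemma pow_le_one_iff₀' {Γ₀ : Type*} [LinearOrderedCommGroupWithZero Γ₀] {a : Γ₀} {n : ℕ}
    (hn : n ≠ 0) : a ^ n ≤ 1 ↔ a ≤ 1 :=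
  ⟨fun h => by by_contra h1; exact absurd h (not_le.mpr (one_lt_pow₀ (not_le.mp h1) hn)),
   fun h => pow_le_one₀ zero_le' h⟩

theorem exists_valuation_extension
    {Γ₀ : Type*} [LinearOrderedCommGroupWithZero Γ₀]
    (hroot : ∀ γ : Γ₀, γ ≠ 0 → ∀ n : ℕ, 1 ≤ n → ∃ δ : Γ₀, δ ^ n = γ)
    {K F : Type*} [Field K] [Field F] [Algebra K F] [Algebra.IsAlgebraic K F]
    (v : Valuation K Γ₀) :
    ∃ u : Valuation F Γ₀, u.comap (algebraMap K F) = v := by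
  classical
  set O := v.valuationSubring with hO
  set aK := algebraMap K F with haK
  have haKinj : Function.Injective aK := (algebraMap K F).injective
  set φ : O →+* F := aK.comp O.subtype with hφ
  obtain ⟨B, hB, hloc⟩ := IsLocalRing.exists_factor_valuationRing φ
  set wB := B.valuation with hwB
  -- membership facts
  have mem1 : ∀ k : K, v k ≤ 1 → wB (aK k) ≤ 1 := by
    intro k hk
    rw [ValuationSubring.valuation_le_one_iff]
    exact hB ⟨k, hk⟩
  have unit1 : ∀ k : K, k ≠ 0 → wB (aK k) = 1 → v k = 1 := by
    intro k hk0 hk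
    have hkB : aK k ∈ B := (ValuationSubring.valuation_le_one_iff B _).mp hk.le
    have hkiB : (aK k)⁻¹ ∈ B := by
      rw [← ValuationSubring.valuation_le_one_iff, map_inv₀, hk, inv_one]
    have main : ∀ k : K, k ≠ 0 → v k ≤ 1 → aK k ∈ B → (aK k)⁻¹ ∈ B → v k = 1 := by
      intro k hk0 hk1 hkB hkiB
      have hker : aK k ≠ 0 := fun he => hk0 (haKinj (by simpa using he))
      have hunit : IsUnit (φ.codRestrict B.toSubring hB ⟨k, hk1⟩) := by
        refine isUnit_iff_exists_inv.mpr ⟨⟨(aK k)⁻¹, hkiB⟩, ?_⟩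
        ext
        exact mul_inv_cancel₀ hker
      have := hloc.map_nonunit _ hunit
      obtain ⟨b, hb⟩ := this.exists_right_inv
      have hbk : k * (b : K) = 1 := congrArg Subtype.val hb
      have hvb : v (b : K) ≤ 1 := b.2
      have : v k * v (b : K) = 1 := by rw [← map_mul, hbk, map_one]
      refine le_antisymm hk1 ?_
      calc (1:Γ₀) = v k * v b := this.symm
      _ ≤ v k * 1 := mul_le_mul_right hvb _
      _ = v k := mul_one _
    rcases le_total (v k) 1 with h1 | h1
    · exact main k hk0 h1 hkB hkiB
    · have hki : v k⁻¹ ≤ 1 := by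
        rw [map_inv₀]
        exact inv_le_one_of_one_le₀ h1
      have := main k⁻¹ (inv_ne_zero hk0) hki (by rwa [map_inv₀]) (by rwa [map_inv₀, inv_inv])
      rw [map_inv₀, inv_eq_one] at this
      exact this
  have vle : ∀ k : K, k ≠ 0 → (wB (aK k) ≤ 1 ↔ v k ≤ 1) := by
    intro k hk0
    refine ⟨fun hle => ?_, mem1 k⟩
    by_contra hgt
    have h1 : v k⁻¹ ≤ 1 := by
      rw [map_inv₀]
      exact (inv_le_one_of_one_le₀ (not_le.mp hgt).le)
    have h2 : wB (aK k⁻¹) ≤ 1 := mem1 _ h1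
    rw [map_inv₀, map_inv₀] at h2
    have hne : wB (aK k) ≠ 0 := by
      rw [Valuation.ne_zero_iff]
      exact fun he => hk0 (haKinj (by simpa using he))
    have : wB (aK k) = 1 :=
      le_antisymm hle ((inv_le_one₀ (lt_of_le_of_ne zero_le' (Ne.symm hne))).mp h2)
    exact hgt ((unit1 k hk0 this).le)
  have keyDiv : ∀ k k' : K, k ≠ 0 → k' ≠ 0 → wB (aK k) = wB (aK k') → v k = v k' := by
    intro k k' hk hk' he
    have h1 : wB (aK (k * k'⁻¹)) = 1 := by
      rw [map_mul, map_inv₀, map_mul, map_inv₀, he]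
      exact mul_inv_cancel₀ (by rw [Valuation.ne_zero_iff]; exact fun h0 => hk' (haKinj (by simpa using h0)))
    have := unit1 _ (mul_ne_zero hk (inv_ne_zero hk')) h1
    rw [map_mul, map_inv₀] at this
    have hv' : v k' ≠ 0 := by rwa [Valuation.ne_zero_iff]
    field_simp at this
    exact this
  -- existence of n, k with wB x ^ n = wB (aK k)
  have ex : ∀ x : F, x ≠ 0 → ∃ (n : ℕ) (k : K), 1 ≤ n ∧ k ≠ 0 ∧ wB x ^ n = wB (aK k) := by
    intro x hx
    have hint : IsIntegral K x := (Algebra.IsAlgebraic.isAlgebraic x).isIntegral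
    set p := minpoly K x with hp
    have hc0 : p.coeff 0 ≠ 0 := minpoly.coeff_zero_ne_zero hint hx
    set g : ℕ → F := fun i => aK (p.coeff i) * x ^ i with hg
    have hsum : ∑ i ∈ Finset.range (p.natDegree + 1), g i = 0 := by
      have h0 := minpoly.aeval K x
      rw [← hp, Polynomial.aeval_eq_sum_range] at h0
      simpa [hg, Algebra.smul_def] using h0
    have h0mem : 0 ∈ Finset.range (p.natDegree + 1) := Finset.mem_range.mpr (Nat.succ_pos _)
    obtain ⟨j, hjmem, hjmax⟩ := Finset.exists_max_image (Finset.range (p.natDegree + 1))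
      (fun i => wB (g i)) ⟨0, h0mem⟩
    have hg0 : wB (g 0) ≠ 0 := by
      rw [Valuation.ne_zero_iff, hg]
      simp only [pow_zero, mul_one]
      exact fun he => hc0 (haKinj (by simpa using he))
    have hgj : wB (g j) ≠ 0 := fun he => hg0 (le_antisymm (he ▸ hjmax 0 h0mem) zero_le')
    have hrest : ∑ i ∈ (Finset.range (p.natDegree + 1)).erase j, g i = - g j := by
      have := Finset.sum_erase_add (Finset.range (p.natDegree + 1)) g hjmem
      rw [hsum] at this
      linear_combination this
    have hexi : ∃ i ∈ (Finset.range (p.natDegree + 1)).erase j, wB (g i) = wB (g j) := by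
      by_contra hcon
      push_neg at hcon
      have hlt : ∀ i ∈ (Finset.range (p.natDegree + 1)).erase j, wB (g i) < wB (g j) :=
        fun i hi => lt_of_le_of_ne (hjmax i (Finset.mem_of_mem_erase hi)) (hcon i hi)
      have := Valuation.map_sum_lt wB hgj hlt
      rw [hrest, Valuation.map_neg] at this
      exact absurd this (lt_irrefl _)
    obtain ⟨i, himem, hieq⟩ := hexi
    have hij : i ≠ j := Finset.ne_of_mem_erase himem
    have hgi : wB (g i) ≠ 0 := hieq ▸ hgj
    have hci : p.coeff i ≠ 0 := by
      intro h0
      apply hgi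
      rw [hg]
      simp [h0]
    have hcj : p.coeff j ≠ 0 := by
      intro h0
      apply hgj
      rw [hg]
      simp [h0]
    have step : ∀ (a b : ℕ) (ka kb : K), a < b → ka ≠ 0 → kb ≠ 0 →
        wB (aK ka) * wB x ^ a = wB (aK kb) * wB x ^ b →
        ∃ (n : ℕ) (k : K), 1 ≤ n ∧ k ≠ 0 ∧ wB x ^ n = wB (aK k) := by
      intro a b ka kb hab hka hkb heq
      refine ⟨b - a, ka * kb⁻¹, by omega, mul_ne_zero hka (inv_ne_zero hkb), ?_⟩
      have hkaF : wB (aK ka) ≠ 0 := by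
        rw [Valuation.ne_zero_iff]; exact fun h0 => hka (haKinj (by simpa using h0))
      have hkbF : wB (aK kb) ≠ 0 := by
        rw [Valuation.ne_zero_iff]; exact fun h0 => hkb (haKinj (by simpa using h0))
      have hxF : wB x ≠ 0 := by rwa [Valuation.ne_zero_iff]
      have hxa : wB x ^ a ≠ 0 := pow_ne_zero _ hxF
      have hb : b = a + (b - a) := by omega
      rw [hb, pow_add] at heq
      have h3 : wB (aK ka) = wB (aK kb) * wB x ^ (b - a) := by
        apply mul_right_cancel₀ hxa
        rw [heq, mul_comm (wB x ^ a), mul_assoc]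
      have h4 : wB (aK (ka * kb⁻¹)) = wB (aK ka) * (wB (aK kb))⁻¹ := by
        rw [map_mul, map_inv₀, map_mul, map_inv₀]
      rw [h4, h3, mul_comm (wB (aK kb)), mul_assoc, mul_inv_cancel₀ hkbF, mul_one]
    have heq2 : wB (aK (p.coeff i)) * wB x ^ i = wB (aK (p.coeff j)) * wB x ^ j := by
      have h1 : wB (g i) = wB (aK (p.coeff i)) * wB x ^ i := by rw [hg]; simp [map_mul, map_pow]
      have h2 : wB (g j) = wB (aK (p.coeff j)) * wB x ^ j := by rw [hg]; simp [map_mul, map_pow]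
      rw [← h1, ← h2, hieq]
    rcases lt_or_gt_of_ne hij with hlt | hlt
    · exact step i j _ _ hlt hci hcj heq2
    · exact step j i _ _ hlt hcj hci heq2.symm
  have exδ : ∀ x : F, x ≠ 0 → ∃ δ : Γ₀, δ ≠ 0 ∧ ∃ (n : ℕ) (k : K),
      1 ≤ n ∧ k ≠ 0 ∧ wB x ^ n = wB (aK k) ∧ δ ^ n = v k := by
    intro x hx
    obtain ⟨n, k, hn, hk, hw⟩ := ex x hx
    have hvk : v k ≠ 0 := by rwa [Valuation.ne_zero_iff]
    obtain ⟨δ, hδ⟩ := hroot (v k) hvk n hn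
    refine ⟨δ, ?_, n, k, hn, hk, hw, hδ⟩
    intro h0
    rw [h0, zero_pow (by omega)] at hδ
    exact hvk hδ.symm
  set uf : F → Γ₀ := fun x => if hx : x = 0 then 0 else (exδ x hx).choose with huf
  have uf0 : uf 0 = 0 := by simp [huf]
  have key : ∀ (x : F) (hx : x ≠ 0) (n : ℕ) (k : K), 1 ≤ n → k ≠ 0 →
      wB x ^ n = wB (aK k) → uf x ^ n = v k := by
    intro x hx n k hn hk hw
    obtain ⟨hδ0, n₀, k₀, hn₀, hk₀, hw₀, hδ⟩ := (exδ x hx).choose_spec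
    have hufx : uf x = (exδ x hx).choose := dif_neg hx
    have hwe : wB (aK (k ^ n₀)) = wB (aK (k₀ ^ n)) := by
      rw [map_pow, map_pow, map_pow, map_pow, ← hw, ← hw₀, ← pow_mul, ← pow_mul, Nat.mul_comm]
    have hvv := keyDiv _ _ (pow_ne_zero _ hk) (pow_ne_zero _ hk₀) hwe
    rw [map_pow, map_pow] at hvv
    have hfin : (uf x ^ n) ^ n₀ = (v k) ^ n₀ := by
      rw [hufx, ← pow_mul, Nat.mul_comm n n₀, pow_mul, hδ, hvv]
    exact pow_left_inj₀' (by omega) hfin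
  have ufK : ∀ k : K, uf (aK k) = v k := by
    intro k
    rcases eq_or_ne k 0 with rfl | hk
    · rw [map_zero, map_zero, uf0]
    · have h1 := key (aK k) (fun h => hk (haKinj (by simpa using h))) 1 k le_rfl hk
        (by rw [pow_one])
      simpa using h1
  have ufne : ∀ x : F, x ≠ 0 → uf x ≠ 0 := by
    intro x hx
    obtain ⟨n, k, hn, hk, hw⟩ := ex x hx
    have hkey := key x hx n k hn hk hw
    intro h0
    rw [h0, zero_pow (by omega)] at hkey
    have hvk : v k ≠ 0 := by rwa [Valuation.ne_zero_iff]
    exact hvk hkey.symm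
  have ufmul : ∀ x y : F, uf (x * y) = uf x * uf y := by
    intro x y
    rcases eq_or_ne x 0 with rfl | hx
    · rw [zero_mul, uf0, zero_mul]
    rcases eq_or_ne y 0 with rfl | hy
    · rw [mul_zero, uf0, mul_zero]
    obtain ⟨n, k, hn, hk, hw⟩ := ex x hx
    obtain ⟨m, k', hm, hk', hw'⟩ := ex y hy
    have hxy : x * y ≠ 0 := mul_ne_zero hx hy
    have hkk' : k ^ m * k' ^ n ≠ 0 := mul_ne_zero (pow_ne_zero _ hk) (pow_ne_zero _ hk')
    have hwxy : wB (x * y) ^ (n * m) = wB (aK (k ^ m * k' ^ n)) := by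
      have e1 : wB (x * y) ^ (n * m) = (wB x ^ n) ^ m * (wB y ^ m) ^ n := by
        rw [map_mul, mul_pow, pow_mul (wB x), Nat.mul_comm n m, pow_mul (wB y)]
      rw [e1, hw, hw', ← map_pow wB (aK k), ← map_pow wB (aK k'), ← map_pow aK, ← map_pow aK,
        ← map_mul wB, ← map_mul aK]
    have h1 := key (x * y) hxy (n * m) (k ^ m * k' ^ n)
      (Nat.one_le_iff_ne_zero.mpr (Nat.mul_ne_zero (by omega) (by omega))) hkk' hwxy
    have h2 : (uf x * uf y) ^ (n * m) = v (k ^ m * k' ^ n) := by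
      rw [mul_pow, pow_mul (uf x), Nat.mul_comm n m, pow_mul (uf y),
        key x hx n k hn hk hw, key y hy m k' hm hk' hw', ← map_pow, ← map_pow, ← map_mul]
    exact pow_left_inj₀' (Nat.mul_ne_zero (by omega) (by omega)) (h1.trans h2.symm)
  have ufle : ∀ x : F, x ≠ 0 → (uf x ≤ 1 ↔ wB x ≤ 1) := by
    intro x hx
    obtain ⟨n, k, hn, hk, hw⟩ := ex x hx
    have h1 := key x hx n k hn hk hw
    have hn0 : n ≠ 0 := by omega
    rw [← pow_le_one_iff₀' hn0 (a := uf x), h1, ← pow_le_one_iff₀' hn0 (a := wB x), hw]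
    exact (vle k hk).symm
  have uf1 : uf 1 = 1 := by
    have := ufK 1
    rwa [map_one, map_one] at this
  have ufadd : ∀ x y : F, uf (x + y) ≤ max (uf x) (uf y) := by
    have aux : ∀ x y : F, x ≠ 0 → y ≠ 0 → x + y ≠ 0 → uf y ≤ uf x → uf (x + y) ≤ uf x := by
      intro x y hx hy hxy hle
      have hz : y * x⁻¹ ≠ 0 := mul_ne_zero hy (inv_ne_zero hx)
      have hix : uf x * uf x⁻¹ = 1 := by rw [← ufmul, mul_inv_cancel₀ hx, uf1]
      have huinv : uf x⁻¹ = (uf x)⁻¹ := (inv_eq_of_mul_eq_one_right hix).symm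
      have hz1 : uf (y * x⁻¹) ≤ 1 := by
        rw [ufmul, huinv]
        calc uf y * (uf x)⁻¹ ≤ uf x * (uf x)⁻¹ := mul_le_mul_left hle _
        _ = 1 := mul_inv_cancel₀ (ufne x hx)
      have hwz : wB (y * x⁻¹) ≤ 1 := (ufle _ hz).mp hz1
      have hone : (1 : F) + y * x⁻¹ ≠ 0 := by
        intro h0
        apply hxy
        have : ((1 : F) + y * x⁻¹) * x = 0 := by rw [h0, zero_mul]
        rw [add_mul, one_mul, mul_assoc, inv_mul_cancel₀ hx, mul_one] at this
        exact this
      have hw1 : wB (1 + y * x⁻¹) ≤ 1 := by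
        refine le_trans (wB.map_add _ _) ?_
        simp only [map_one, max_le_iff]
        exact ⟨le_rfl, hwz⟩
      have hu1 : uf (1 + y * x⁻¹) ≤ 1 := (ufle _ hone).mpr hw1
      have hfac : x + y = (1 + y * x⁻¹) * x := by
        rw [add_mul, one_mul, mul_assoc, inv_mul_cancel₀ hx, mul_one]
      rw [hfac, ufmul]
      calc uf (1 + y * x⁻¹) * uf x ≤ 1 * uf x := mul_le_mul_left hu1 _
      _ = uf x := one_mul _
    intro x y
    rcases eq_or_ne x 0 with rfl | hx
    · rw [zero_add]; exact le_max_right _ _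
    rcases eq_or_ne y 0 with rfl | hy
    · rw [add_zero]; exact le_max_left _ _
    rcases eq_or_ne (x + y) 0 with h0 | hxy
    · rw [h0, uf0]; exact zero_le'
    rcases le_total (uf y) (uf x) with hle | hle
    · exact le_trans (aux x y hx hy hxy hle) (le_max_left _ _)
    · refine le_trans ?_ (le_max_right _ _)
      rw [add_comm]
      exact aux y x hy hx (by rwa [add_comm]) hle
  let u : Valuation F Γ₀ :=
    { toFun := uf
      map_zero' := uf0
      map_one' := uf1
      map_mul' := ufmul
      map_add_le_max' := ufadd }
  exact ⟨u, Valuation.ext fun k => ufK k⟩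


theorem norm_algebraMap_tower (K : Type*) {F L : Type*} [Field K] [Field F] [Field L]
    [Algebra K L] [Algebra K F] [Algebra F L] [IsScalarTower K F L]
    [FiniteDimensional K F] [FiniteDimensional F L] (y : F) :
    Algebra.norm K (algebraMap F L y) = Algebra.norm K y ^ finrank F L := by
  let b := Module.finBasis K F
  let c := Module.finBasis F L
  rw [Algebra.norm_eq_matrix_det (b.smulTower c), Algebra.smulTower_leftMulMatrix_algebraMap,
    Matrix.det_blockDiagonal, Algebra.norm_eq_matrix_det b]
  simp [Finset.prod_const]

theorem norm_eq_norm_adjoin' (K : Type*) {L : Type*} [Field K] [Field L] [Algebra K L]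
    [FiniteDimensional K L] (x : L) :
    Algebra.norm K x = Algebra.norm K (AdjoinSimple.gen K x) ^ finrank K⟮x⟯ L := by
  have := norm_algebraMap_tower K (F := K⟮x⟯) (L := L) (AdjoinSimple.gen K x)
  rwa [AdjoinSimple.algebraMap_gen K x] at this


-- multiset product lemma
lemma val_prod_sub_one {R Γ₀ : Type*} [CommRing R] [LinearOrderedCommGroupWithZero Γ₀]
    (u : Valuation R Γ₀) {γ : Γ₀} (hγ : γ ≤ 1) (S : Multiset R)
    (h : ∀ s ∈ S, u (s - 1) ≤ γ) : u (S.prod - 1) ≤ γ := by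
  induction S using Multiset.induction_on with
  | empty => simpa using zero_le'
  | cons a S ih =>
    have ha : u (a - 1) ≤ γ := h a (Multiset.mem_cons_self _ _)
    have hS : u (S.prod - 1) ≤ γ := ih fun s hs => h s (Multiset.mem_cons_of_mem hs)
    have ha1 : u a ≤ 1 := by
      have : u a ≤ max (u (a - 1)) (u 1) := by
        have := u.map_add (a - 1) 1
        simpa using this
      simpa using this.trans (max_le (ha.trans hγ) (le_of_eq (map_one u)))
    have key : (a ::ₘ S).prod - 1 = a * (S.prod - 1) + (a - 1) := by
      rw [Multiset.prod_cons]; ring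
    rw [key]
    refine le_trans (u.map_add _ _) (max_le ?_ ha)
    rw [map_mul]
    calc u a * u (S.prod - 1) ≤ 1 * γ := mul_le_mul' ha1 hS
    _ = γ := one_mul _

-- roots to embeddings
lemma exists_algHom_of_root {K L M : Type*} [Field K] [Field L] [Field M]
    [Algebra K L] [Algebra K M] [FiniteDimensional K L] [IsAlgClosed M]
    (f : L) {r : M} (hr : r ∈ (minpoly K f).aroots M) : ∃ τ : L →ₐ[K] M, τ f = r := by
  have hint : IsIntegral K f := IsIntegral.of_finite K f
  have hr' : aeval r (minpoly K f) = 0 := by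
    rw [Polynomial.mem_aroots] at hr
    exact hr.2
  let pb := IntermediateField.adjoin.powerBasis hint
  have hgen : minpoly K pb.gen = minpoly K f := by
    rw [IntermediateField.adjoin.powerBasis_gen]
    have := minpoly.algebraMap_eq (A := K) (algebraMap (↥K⟮f⟯) L).injective (AdjoinSimple.gen K f)
    rw [AdjoinSimple.algebraMap_gen] at this
    exact this.symm ▸ rfl
  have hy : aeval r (minpoly K pb.gen) = 0 := by rw [hgen]; exact hr'
  let φ : ↥K⟮f⟯ →ₐ[K] M := pb.lift r hy
  letI : Algebra (↥K⟮f⟯) M := φ.toRingHom.toAlgebra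
  haveI : IsScalarTower K (↥K⟮f⟯) M := IsScalarTower.of_algebraMap_eq fun c => (φ.commutes c).symm
  haveI : Algebra.IsAlgebraic (↥K⟮f⟯) L := Algebra.IsAlgebraic.of_finite _ _
  haveI : NoZeroSMulDivisors (↥K⟮f⟯) M :=
    inferInstance
  let ψ : L →ₐ[↥K⟮f⟯] M := IsAlgClosed.lift
  refine ⟨ψ.restrictScalars K, ?_⟩
  have h1 : f = algebraMap (↥K⟮f⟯) L (AdjoinSimple.gen K f) := (AdjoinSimple.algebraMap_gen K f).symm
  have h2 : (ψ.restrictScalars K) f = ψ (algebraMap (↥K⟮f⟯) L (AdjoinSimple.gen K f)) := by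
    rw [← h1]; rfl
  rw [h2, ψ.commutes]
  show φ (AdjoinSimple.gen K f) = r
  have : pb.gen = AdjoinSimple.gen K f := IntermediateField.adjoin.powerBasis_gen hint
  rw [← this]
  exact pb.lift_gen r hy

/-- **Lemma 5.3 of the paper (multiplicative notation).**
Let `Γ₀` be a linearly ordered commutative group with zero in which every nonzero element
has an `n`-th root for every `n ≥ 1`.  Let `v` be a `Γ₀`-valued valuation on a field `K`,
let `L/K` be a finite field extension, `f ∈ L` and `γ < 1` in `Γ₀`.  If every valuation
`w` on `L` extending `v` satisfies `w(f - 1) ≤ γ`, then `v(N_{L/K}(f) - 1) ≤ γ`. -/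
theorem valuation_norm_sub_one_le
    (Γ₀ : Type*) [LinearOrderedCommGroupWithZero Γ₀]
    (hroot : ∀ γ : Γ₀, γ ≠ 0 → ∀ n : ℕ, 1 ≤ n → ∃ δ : Γ₀, δ ^ n = γ)
    (K L : Type*) [Field K] [Field L] [Algebra K L] [FiniteDimensional K L]
    (v : Valuation K Γ₀) (f : L) (γ : Γ₀) (hγ : γ < 1)
    (h : ∀ w : Valuation L Γ₀, w.comap (algebraMap K L) = v → w (f - 1) ≤ γ) :
    v (Algebra.norm K f - 1) ≤ γ := by
  classical
  set M := AlgebraicClosure L with hM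
  haveI : Algebra.IsAlgebraic K L := Algebra.IsAlgebraic.of_finite K L
  haveI : Algebra.IsAlgebraic K M := Algebra.IsAlgebraic.trans K L M
  obtain ⟨u, hu⟩ := exists_valuation_extension hroot (F := M) v
  have huK : ∀ c : K, u (algebraMap K M c) = v c := fun c => by rw [← hu]; rfl
  have hτ : ∀ τ : L →ₐ[K] M, u (τ f - 1) ≤ γ := by
    intro τ
    have h2 := h (u.comap τ.toRingHom) (by
      apply Valuation.ext
      intro c
      show u (τ (algebraMap K L c)) = v c
      rw [τ.commutes]
      exact huK c)
    have h3 : (u.comap τ.toRingHom) (f - 1) = u (τ f - 1) := by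
      show u (τ (f - 1)) = u (τ f - 1)
      rw [map_sub, map_one]
    rwa [h3] at h2
  have hroots : ∀ r ∈ (minpoly K f).aroots M, u (r - 1) ≤ γ := by
    intro r hr
    obtain ⟨τ, rfl⟩ := exists_algHom_of_root f hr
    exact hτ τ
  have hnorm : algebraMap K M (Algebra.norm K f) =
      ((minpoly K f).aroots M).prod ^ finrank (↥K⟮f⟯) L := by
    rw [norm_eq_norm_adjoin' K f, map_pow,
      IntermediateField.AdjoinSimple.norm_gen_eq_prod_roots f (IsAlgClosed.splits _)]
  have hP : u (((minpoly K f).aroots M).prod - 1) ≤ γ := val_prod_sub_one u hγ.le _ hroots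
  have hPm : u (((minpoly K f).aroots M).prod ^ finrank (↥K⟮f⟯) L - 1) ≤ γ := by
    have := val_prod_sub_one u hγ.le
      (Multiset.replicate (finrank (↥K⟮f⟯) L) (((minpoly K f).aroots M).prod))
      (fun s hs => by rw [Multiset.eq_of_mem_replicate hs]; exact hP)
    rwa [Multiset.prod_replicate] at this
  calc v (Algebra.norm K f - 1) = u (algebraMap K M (Algebra.norm K f - 1)) := (huK _).symm
  _ = u (algebraMap K M (Algebra.norm K f) - 1) := by rw [map_sub, map_one]
  _ ≤ γ := by rw [hnorm]; exact hPm
end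

section
/- Let A be a reduced commutative ring with only finitely many minimal primes that is integrally closed in its total ring of fractions Q(A) (the localization of A at the multiplicative set of non-zero-divisors). Then the canonical ring homomorphism A → ∏_{p minimal} A/p is an isomorphism; in particular, A is a finite product of integrally closed domains. (This is the affine form of the paper's assertion that any finitely reducible normal scheme is a finite disjoint union of normal integral schemes.) -/
open Polynomial nonZeroDivisors

section Aux

variable {A : Type*} [CommRing A]

/-- In a reduced ring, every element of a minimal prime is a zero divisor
(witnessed by an element outside the prime). -/
lemma aux_exists_mul_eq_zero [IsReduced A] {p : Ideal A} (hp : p ∈ minimalPrimes A)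
    {x : A} (hx : x ∈ p) : ∃ y, y ∉ p ∧ x * y = 0 := by
  haveI : p.IsPrime := hp.1.1
  have h1 : IsNilpotent (algebraMap A (Localization p.primeCompl) x) := by
    have hm : algebraMap A (Localization p.primeCompl) x ∈
        ((⊥ : Ideal A).map (algebraMap A (Localization p.primeCompl))).radical := by
      rw [IsLocalization.AtPrime.radical_map_of_mem_minimalPrimes (A := Localization p.primeCompl)
        (q := p) (I := ⊥) hp]
      exact Ideal.mem_map_of_mem _ hx
    obtain ⟨n, hn⟩ := hm
    rw [Ideal.map_bot, Ideal.mem_bot] at hn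
    exact ⟨n, hn⟩
  obtain ⟨n, hn⟩ := h1
  rw [← map_pow, IsLocalization.map_eq_zero_iff p.primeCompl] at hn
  obtain ⟨⟨s, hs⟩, hsx⟩ := hn
  refine ⟨s, hs, ?_⟩
  have h2 : (x * s) ^ (n + 1) = 0 := by
    have h3 : (x * s) ^ (n + 1) = (s * x ^ n) * (x * s ^ n) := by ring
    rw [h3, hsx, zero_mul]
  exact IsNilpotent.eq_zero ⟨n + 1, h2⟩

/-- In a reduced ring, every minimal prime is disjoint from the non-zero-divisors. -/
lemma aux_disjoint [IsReduced A] {p : Ideal A} (hp : p ∈ minimalPrimes A) :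
    Disjoint (A⁰ : Set A) (p : Set A) := by
  rw [Set.disjoint_right]
  intro x hxp hx
  obtain ⟨y, hy, hxy⟩ := aux_exists_mul_eq_zero hp hxp
  have : y = 0 := mem_nonZeroDivisors_iff_right.mp hx y (by rwa [mul_comm])
  exact hy (this ▸ p.zero_mem)

/-- In a reduced ring, every zero divisor lies in some minimal prime. -/
lemma aux_mem_minimal_of_zd [IsReduced A] {x y : A} (hy : y ≠ 0) (hxy : x * y = 0) :
    ∃ p ∈ minimalPrimes A, x ∈ p := by
  have hny : ¬ IsNilpotent y := fun h => hy h.eq_zero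
  rw [nilpotent_iff_mem_prime] at hny
  push_neg at hny
  obtain ⟨q, hq, hyq⟩ := hny
  haveI := hq
  obtain ⟨p, hp, hpq⟩ := Ideal.exists_minimalPrimes_le (I := (⊥ : Ideal A)) (J := q) bot_le
  haveI hpp : p.IsPrime := hp.1.1
  refine ⟨p, hp, ?_⟩
  have hm : x * y ∈ p := by rw [hxy]; exact p.zero_mem
  rcases hpp.mem_or_mem hm with h | h
  · exact h
  · exact absurd (hpq h) hyq

/-- A prime consisting of zero divisors is a minimal prime (finitely many minimal primes). -/
lemma aux_prime_mem_minimal [IsReduced A] (hfin : (minimalPrimes A).Finite)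
    {m : Ideal A} (hm : m.IsPrime) (hdisj : Disjoint (A⁰ : Set A) (m : Set A)) :
    m ∈ minimalPrimes A := by
  haveI := hm
  obtain ⟨p₀, hp₀, hp₀m⟩ := Ideal.exists_minimalPrimes_le (I := (⊥ : Ideal A)) (J := m) bot_le
  have hsub : (m : Set A) ⊆ ⋃ p ∈ hfin.toFinset, (p : Set A) := by
    intro x hx
    have hxnzd : x ∉ A⁰ := fun h => Set.disjoint_left.mp hdisj h hx
    rw [mem_nonZeroDivisors_iff_right] at hxnzd
    push_neg at hxnzd
    obtain ⟨y, hxy, hy⟩ := hxnzd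
    obtain ⟨p, hp, hxp⟩ := aux_mem_minimal_of_zd hy (by rwa [mul_comm])
    exact Set.mem_biUnion (hfin.mem_toFinset.mpr hp) hxp
  have := (Ideal.subset_union_prime (f := fun I : Ideal A => I) m m
    (fun i hi _ _ => (hfin.mem_toFinset.mp hi).1.1)).mp hsub
  obtain ⟨k, hk, hmk⟩ := this
  rw [Set.Finite.mem_toFinset] at hk
  have h1 : p₀ ≤ k := le_trans hp₀m hmk
  have h2 : k ≤ p₀ := hk.2 hp₀.1 h1
  have : m = p₀ := le_antisymm (le_trans hmk h2) hp₀m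
  rwa [this]

end Aux

section Frac

variable (A : Type*) [CommRing A] [IsReduced A]

local notation "Q" => FractionRing A

/-- Every prime of the total fraction ring is the extension of a minimal prime. -/
lemma aux_prime_Q (hfin : (minimalPrimes A).Finite) (J : Ideal Q) (hJ : J.IsPrime) :
    ∃ p ∈ minimalPrimes A, J = Ideal.map (algebraMap A Q) p := by
  set m := J.comap (algebraMap A Q) with hm
  haveI : m.IsPrime := Ideal.IsPrime.comap _
  have hdisj : Disjoint (A⁰ : Set A) (m : Set A) := by
    rw [Set.disjoint_right]
    intro s hsm hs
    have hu : IsUnit (algebraMap A Q s) := IsLocalization.map_units Q (⟨s, hs⟩ : A⁰)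
    exact hJ.ne_top (J.eq_top_of_isUnit_mem hsm hu)
  exact ⟨m, aux_prime_mem_minimal hfin ‹m.IsPrime› hdisj,
    (IsLocalization.map_comap A⁰ Q J).symm⟩

/-- extensions of distinct minimal primes to `Q` are comaximal. -/
lemma aux_comax (hfin : (minimalPrimes A).Finite) {p q : Ideal A}
    (hp : p ∈ minimalPrimes A) (hq : q ∈ minimalPrimes A) (hne : p ≠ q) :
    Ideal.map (algebraMap A Q) p ⊔ Ideal.map (algebraMap A Q) q = ⊤ := by
  by_contra h
  obtain ⟨M, hM, hPM⟩ := Ideal.exists_le_maximal _ h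
  obtain ⟨k, hk, rfl⟩ := aux_prime_Q A hfin M hM.isPrime
  have hco : ∀ {r : Ideal A}, r ∈ minimalPrimes A →
      (Ideal.map (algebraMap A Q) r ≤ Ideal.map (algebraMap A Q) k) → r = k := by
    intro r hr hle
    have h1 : r ≤ k := by
      have := Ideal.comap_mono (f := algebraMap A Q) hle
      rwa [(show Ideal.comap (algebraMap A Q) (Ideal.map (algebraMap A Q) r) = r from
          IsLocalization.under_map_of_isPrime_disjoint A⁰ Q hr.1.1 (aux_disjoint hr)),
        (show Ideal.comap (algebraMap A Q) (Ideal.map (algebraMap A Q) k) = k from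
          IsLocalization.under_map_of_isPrime_disjoint A⁰ Q hk.1.1 (aux_disjoint hk))] at this
    exact le_antisymm h1 (hk.2 hr.1 h1)
  exact hne ((hco hp (le_trans le_sup_left hPM)).trans (hco hq (le_trans le_sup_right hPM)).symm)

end Frac

section Key

variable (A : Type*) [CommRing A] [IsReduced A] [IsIntegrallyClosed A]

local notation "Q" => FractionRing A

/-- Key construction: an "indicator" element for each minimal prime. -/
lemma aux_key (hfin : (minimalPrimes A).Finite) {p : Ideal A} (hp : p ∈ minimalPrimes A) :
    ∃ a : A, a - 1 ∈ p ∧ ∀ q ∈ minimalPrimes A, q ≠ p → a ∈ q := by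
  classical
  haveI : Finite ↥(minimalPrimes A) := hfin.to_subtype
  set F : ↥(minimalPrimes A) → Ideal Q := fun q => Ideal.map (algebraMap A Q) q.1 with hF
  have hpair : Pairwise (Function.onFun IsCoprime F) := by
    intro i j hij
    rw [Function.onFun, Ideal.isCoprime_iff_sup_eq]
    exact aux_comax A hfin i.2 j.2 (fun h => hij (Subtype.ext h))
  obtain ⟨z, hz⟩ := Ideal.quotientInfToPiQuotient_surj hpair
      (fun j => if j = (⟨p, hp⟩ : ↥(minimalPrimes A)) then 1 else 0)
  obtain ⟨e, rfl⟩ := Ideal.Quotient.mk_surjective z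
  have he : ∀ j, Ideal.Quotient.mk (F j) e = if j = ⟨p, hp⟩ then 1 else 0 := by
    intro j
    rw [← Ideal.quotientInfToPiQuotient_mk' F e j, hz]
  have he1 : e - 1 ∈ F ⟨p, hp⟩ := by
    have := he ⟨p, hp⟩
    rw [if_pos rfl] at this
    exact Ideal.Quotient.eq.mp (by rw [this, map_one])
  have he0 : ∀ j, j ≠ (⟨p, hp⟩ : ↥(minimalPrimes A)) → e ∈ F j := by
    intro j hj
    have := he j
    rw [if_neg hj] at this
    exact Ideal.Quotient.eq_zero_iff_mem.mp this
  have hee : e * e - e = 0 := by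
    have hnil : IsNilpotent (e * e - e) := by
      rw [nilpotent_iff_mem_prime]
      intro J hJ
      obtain ⟨q, hq, rfl⟩ := aux_prime_Q A hfin J hJ
      by_cases h : (⟨q, hq⟩ : ↥(minimalPrimes A)) = ⟨p, hp⟩
      · have h1 : e - 1 ∈ Ideal.map (algebraMap A Q) q := by
          have := he1; rw [← h] at this; exact this
        have h2 : e * e - e = e * (e - 1) := by ring
        rw [h2]; exact Ideal.mul_mem_left _ _ h1
      · have h1 : e ∈ Ideal.map (algebraMap A Q) q := he0 ⟨q, hq⟩ h
        have h2 : e * e - e = (e - 1) * e := by ring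
        rw [h2]; exact Ideal.mul_mem_left _ _ h1
    exact hnil.eq_zero
  have hint : IsIntegral A e := by
    refine ⟨X ^ 2 - X, monic_X_pow_sub (degree_X_le.trans_lt (by norm_num)), ?_⟩
    simp only [eval₂_sub, eval₂_X_pow, eval₂_X]
    rw [pow_two]; exact hee
  obtain ⟨a, ha⟩ := (IsIntegralClosure.isIntegral_iff (A := A) (B := FractionRing A)).mp hint
  refine ⟨a, ?_, ?_⟩
  · have hmem : algebraMap A Q (a - 1) ∈ F ⟨p, hp⟩ := by
      rw [map_sub, map_one, ha]; exact he1
    rw [← IsLocalization.under_map_of_isPrime_disjoint A⁰ Q hp.1.1 (aux_disjoint hp)]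
    exact Ideal.mem_comap.mpr hmem
  · intro q hq hqp
    have hmem : algebraMap A Q a ∈ F ⟨q, hq⟩ := by
      rw [ha]; exact he0 ⟨q, hq⟩ (fun h => hqp (congrArg Subtype.val h))
    rw [← IsLocalization.under_map_of_isPrime_disjoint A⁰ Q hq.1.1 (aux_disjoint hq)]
    exact Ideal.mem_comap.mpr hmem

end Key

section Part2

variable (A : Type*) [CommRing A] [IsReduced A] [IsIntegrallyClosed A]

lemma aux_quot_ic (hfin : (minimalPrimes A).Finite) {p : Ideal A}
    (hp : p ∈ minimalPrimes A) : IsIntegrallyClosed (A ⧸ p) := by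
  haveI hpp : p.IsPrime := hp.1.1
  set g := algebraMap A (FractionRing A) with hg
  set Pp : Ideal (FractionRing A) := Ideal.map g p with hPpdef
  haveI hPprime : Pp.IsPrime :=
    IsLocalization.isPrime_of_isPrime_disjoint A⁰ _ p hpp (aux_disjoint hp)
  have hcomap : Pp.comap g = p :=
    IsLocalization.under_map_of_isPrime_disjoint A⁰ _ hpp (aux_disjoint hp)
  haveI hmax : Pp.IsMaximal := by
    obtain ⟨M, hM, hPM⟩ := Ideal.exists_le_maximal Pp hPprime.ne_top
    obtain ⟨q, hq, rfl⟩ := aux_prime_Q A hfin M hM.isPrime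
    have hpq : p ≤ q := by
      have h1 := Ideal.comap_mono (f := g) hPM
      rwa [hcomap,
        (show Ideal.comap g (Ideal.map g q) = q from
          IsLocalization.under_map_of_isPrime_disjoint A⁰ _ hq.1.1 (aux_disjoint hq))] at h1
    have hqp : p = q := le_antisymm hpq (hq.2 hp.1 hpq)
    rw [hPpdef, hqp]
    exact hM
  letI : Field ((FractionRing A) ⧸ Pp) := Ideal.Quotient.field Pp
  set f : A ⧸ p →+* (FractionRing A) ⧸ Pp := Ideal.quotientMap Pp g Ideal.le_comap_map with hf
  have finj : Function.Injective f := by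
    rw [injective_iff_map_eq_zero]
    intro b hb
    obtain ⟨x, rfl⟩ := Ideal.Quotient.mk_surjective b
    rw [hf, Ideal.quotientMap_mk, Ideal.Quotient.eq_zero_iff_mem] at hb
    rw [Ideal.Quotient.eq_zero_iff_mem, ← hcomap]
    exact hb
  letI : Algebra (A ⧸ p) ((FractionRing A) ⧸ Pp) := f.toAlgebra
  have falg : algebraMap (A ⧸ p) ((FractionRing A) ⧸ Pp) = f := rfl
  haveI : IsFractionRing (A ⧸ p) ((FractionRing A) ⧸ Pp) := by
    refine ⟨?_, ?_, ?_⟩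
    · rintro ⟨y, hy⟩
      have hy0 : y ≠ 0 := nonZeroDivisors.ne_zero hy
      have : f y ≠ 0 := fun h => hy0 (finj (by rw [h, map_zero]))
      exact isUnit_iff_ne_zero.mpr (by rw [falg]; exact this)
    · intro z
      obtain ⟨w, rfl⟩ := Ideal.Quotient.mk_surjective z
      obtain ⟨⟨b, s⟩, hbs⟩ := IsLocalization.surj A⁰ w
      have hs0 : Ideal.Quotient.mk p s.1 ≠ 0 := by
        rw [Ne, Ideal.Quotient.eq_zero_iff_mem]
        exact fun h => Set.disjoint_left.mp (aux_disjoint hp) s.2 h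
      refine ⟨⟨Ideal.Quotient.mk p b, ⟨Ideal.Quotient.mk p s.1,
        mem_nonZeroDivisors_of_ne_zero hs0⟩⟩, ?_⟩
      rw [falg, hf]
      show Ideal.Quotient.mk Pp w * Ideal.quotientMap Pp g Ideal.le_comap_map
          (Ideal.Quotient.mk p s.1) = Ideal.quotientMap Pp g Ideal.le_comap_map
          (Ideal.Quotient.mk p b)
      rw [Ideal.quotientMap_mk, Ideal.quotientMap_mk, ← map_mul, hbs]
    · intro x y hxy
      rw [falg] at hxy
      exact ⟨1, by rw [finj hxy]⟩
  rw [isIntegrallyClosed_iff ((FractionRing A) ⧸ Pp)]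
  intro x hx
  -- transfer integrality down to `A`
  haveI : IsScalarTower A (A ⧸ p) ((FractionRing A) ⧸ Pp) := by
    refine IsScalarTower.of_algebraMap_eq fun r => ?_
    rw [falg, hf, Ideal.Quotient.algebraMap_eq, Ideal.quotientMap_mk]
    rfl
  haveI : Algebra.IsIntegral A (A ⧸ p) :=
    Algebra.isIntegral_of_surjective
      (by rw [Ideal.Quotient.algebraMap_eq]; exact Ideal.Quotient.mk_surjective)
  obtain ⟨F, hFm, hFe⟩ := isIntegral_trans (R := A) x hx
  -- the indicator element
  obtain ⟨a, ha1, ha2⟩ := aux_key A hfin hp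
  obtain ⟨w, hw⟩ := Ideal.Quotient.mk_surjective (I := Pp) x
  set Y : FractionRing A := g a * w with hY
  set π : FractionRing A →+* (FractionRing A) ⧸ Pp := Ideal.Quotient.mk Pp with hπ
  have hπg : (π.comp g) = algebraMap A ((FractionRing A) ⧸ Pp) := rfl
  have hπga : π (g a) = 1 := by
    rw [← map_one π]
    exact Ideal.Quotient.eq.mpr (by
      rw [← map_one g, ← map_sub]
      exact Ideal.mem_map_of_mem g ha1)
  have hπY : π Y = x := by rw [hY, map_mul, hπga, one_mul, hπ, hw]
  have hint : IsIntegral A Y := by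
    refine ⟨X * F, monic_X.mul hFm, ?_⟩
    have hz : eval₂ g Y (X * F) = 0 := by
      have hmem : ∀ J : Ideal (FractionRing A), J.IsPrime → eval₂ g Y (X * F) ∈ J := by
        intro J hJ
        obtain ⟨q, hq, rfl⟩ := aux_prime_Q A hfin J hJ
        rw [eval₂_mul, eval₂_X]
        by_cases hqp : q = p
        · subst hqp
          rw [← Ideal.Quotient.eq_zero_iff_mem]
          show π (Y * eval₂ g Y F) = 0
          rw [map_mul, hπY, Polynomial.hom_eval₂, hπY, hπg]
          · rw [hFe, mul_zero]
        · have hYq : Y ∈ Ideal.map g q :=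
            Ideal.mul_mem_right w _ (Ideal.mem_map_of_mem g (ha2 q hq hqp))
          exact Ideal.mul_mem_right _ _ hYq
      exact IsNilpotent.eq_zero (nilpotent_iff_mem_prime.mpr hmem)
    exact hz
  obtain ⟨b, hb⟩ := (IsIntegralClosure.isIntegral_iff (A := A) (B := FractionRing A)).mp hint
  refine ⟨Ideal.Quotient.mk p b, ?_⟩
  rw [falg, hf, Ideal.quotientMap_mk]
  show π (g b) = x
  rw [show g b = Y from hb, hπY]

end Part2

/-- **Affine form of: a finitely reducible normal scheme is a finite disjoint union of
normal integral schemes.**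
Let `A` be a reduced commutative ring with only finitely many minimal primes, integrally
closed in its total ring of fractions.  Then the canonical ring homomorphism
`A → ∏_{p minimal} A/p` is an isomorphism, and each factor `A/p` is an integrally closed
domain. -/
theorem bijective_pi_quotient_of_integrallyClosed
    (A : Type*) [CommRing A] [IsReduced A] (hfin : (minimalPrimes A).Finite)
    [IsIntegrallyClosed A] :
    Function.Bijective
        (Pi.ringHom fun p : minimalPrimes A => Ideal.Quotient.mk p.1) ∧
      ∀ p : minimalPrimes A, IsIntegrallyClosed (A ⧸ p.1) := by
  haveI : Finite ↥(minimalPrimes A) := hfin.to_subtype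
  have hpair : Pairwise (Function.onFun IsCoprime fun p : ↥(minimalPrimes A) => p.1) := by
    intro i j hij
    rw [Function.onFun, Ideal.isCoprime_iff_sup_eq]
    obtain ⟨a, ha1, ha2⟩ := aux_key A hfin i.2
    have hj : a ∈ j.1 := ha2 j.1 j.2 (fun h => hij (Subtype.ext h.symm))
    rw [Ideal.eq_top_iff_one]
    have h1 : (1 : A) = -(a - 1) + a := by ring
    rw [h1]
    exact Submodule.add_mem _ (Ideal.mem_sup_left (neg_mem ha1)) (Ideal.mem_sup_right hj)
  refine ⟨⟨?_, ?_⟩, ?_⟩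
  · rw [injective_iff_map_eq_zero]
    intro x hx
    have hxp : ∀ J : Ideal A, J.IsPrime → x ∈ J := by
      intro J hJ
      haveI := hJ
      obtain ⟨p, hp, hpJ⟩ := Ideal.exists_minimalPrimes_le (I := (⊥ : Ideal A)) (J := J) bot_le
      exact hpJ (Ideal.Quotient.eq_zero_iff_mem.mp (congrFun hx ⟨p, hp⟩))
    exact IsNilpotent.eq_zero (nilpotent_iff_mem_prime.mpr hxp)
  · intro y
    obtain ⟨z, hz⟩ := Ideal.quotientInfToPiQuotient_surj hpair y
    obtain ⟨x, rfl⟩ := Ideal.Quotient.mk_surjective z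
    refine ⟨x, ?_⟩
    funext j
    rw [← hz]
    exact (Ideal.quotientInfToPiQuotient_mk' _ x j).symm
  · intro P
    exact aux_quot_ic A hfin P.2
end
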